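/- Let x₀ ∈ L^∞([0,1]) and v ∈ L^∞_loc([0,∞)). Define x(t,z) = v(t-z) if t ≥ z and x(t,z) = x₀(z-t) if t < z, for (t,z) ∈ [0,∞)×[0,1]. Then for every σ > 0 and t ≥ 0, ess sup_{z∈[0,1]} |x(t,z)| ≤ exp(-σ(t-1))·‖x₀‖_∞ + exp(σ)·sup_{max(0,t-1) ≤ s ≤ t} (|v(s)| exp(-σ(t-s))). -/

import Mathlib

open MeasureTheory Real Set

/-- Sup-norm estimate (2.18) for the mild solution of the transport equation
`x_t + x_z = 0`, `x(t,0) = v(t)`, `x(0,·) = x₀`, given by characteristics: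
`x(t,z) = v(t-z)` for `t ≥ z` and `x(t,z) = x₀(z-t)` for `t < z`. -/
theorem stmt_2 (x₀ v : ℝ → ℝ)
    (hx₀ : Measurable x₀) (hx₀b : ∃ C, ∀ z ∈ Set.Icc (0:ℝ) 1, |x₀ z| ≤ C)
    (hv : Measurable v) (hvloc : ∀ r : ℝ, ∃ C, ∀ s ∈ Set.Icc 0 r, |v s| ≤ C)
    (x : ℝ → ℝ → ℝ)
    (hx : ∀ t ≥ (0:ℝ), ∀ z ∈ Set.Icc (0:ℝ) 1,
      x t z = if z ≤ t then v (t - z) else x₀ (z - t))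
    (σ : ℝ) (hσ : 0 < σ) (t : ℝ) (ht : 0 ≤ t) :
    (MeasureTheory.eLpNorm (fun z => x t z) ⊤ (volume.restrict (Set.Icc (0:ℝ) 1)))
      ≤ ENNReal.ofReal (Real.exp (-σ * (t - 1)))
          * MeasureTheory.eLpNorm x₀ ⊤ (volume.restrict (Set.Icc (0:ℝ) 1))
        + ENNReal.ofReal
            (Real.exp σ * ⨆ s ∈ Set.Icc (max 0 (t - 1)) t, |v s| * Real.exp (-σ * (t - s))) := by
  set μ := volume.restrict (Set.Icc (0:ℝ) 1) with hμ
  set E := MeasureTheory.eLpNorm x₀ ⊤ μ with hEdef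
  set g : ℝ → ℝ := fun s => |v s| * Real.exp (-σ * (t - s)) with hg
  set S : ℝ := ⨆ s ∈ Set.Icc (max 0 (t - 1)) t, g s with hSdef
  obtain ⟨C, hC⟩ := hvloc t
  have hbdd : BddAbove (Set.range fun s => ⨆ _ : s ∈ Set.Icc (max 0 (t-1)) t, g s) := by
    refine ⟨max C 0, ?_⟩
    rintro _ ⟨s, rfl⟩
    by_cases h : s ∈ Set.Icc (max 0 (t-1)) t
    · show (⨆ _ : s ∈ Set.Icc (max 0 (t-1)) t, g s) ≤ max C 0
      rw [ciSup_pos (f := fun _ => g s) h]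
      have hs0 : 0 ≤ s := le_trans (le_max_left _ _) h.1
      have h1 : |v s| ≤ C := hC s ⟨hs0, h.2⟩
      have h2 : Real.exp (-σ * (t - s)) ≤ 1 := by
        rw [Real.exp_le_one_iff]
        nlinarith [h.2]
      have h3 : (0:ℝ) ≤ |v s| := abs_nonneg _
      calc g s ≤ |v s| * 1 := mul_le_mul_of_nonneg_left h2 h3
        _ = |v s| := mul_one _
        _ ≤ max C 0 := le_trans h1 (le_max_left _ _)
    · simp [h, le_max_right]
  have hgle : ∀ s ∈ Set.Icc (max 0 (t-1)) t, g s ≤ S := by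
    intro s hs
    have heq : g s = ⨆ _ : s ∈ Set.Icc (max 0 (t-1)) t, g s := (ciSup_pos (f := fun _ => g s) hs).symm
    rw [hSdef, heq]
    exact le_ciSup hbdd s
  have hS0 : 0 ≤ S := by
    have hmem : t ∈ Set.Icc (max 0 (t-1)) t := ⟨max_le ht (by linarith), le_refl t⟩
    have h1 : 0 ≤ g t := mul_nonneg (abs_nonneg _) (Real.exp_pos _).le
    linarith [hgle t hmem]
  -- the a.e. bound coming from the essential sup of x₀
  have hx₀ae : ∀ᵐ z ∂μ, t < z → (‖x₀ (z - t)‖₊ : ENNReal) ≤ E := by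
    have hEss : ∀ᵐ w ∂μ, (‖x₀ w‖₊ : ENNReal) ≤ E := by
      rw [hEdef, eLpNorm_exponent_top]
      exact ae_le_eLpNormEssSup
    set G' : Set ℝ := {w | ¬ ((‖x₀ w‖₊ : ENNReal) ≤ E)} with hG'
    have hG'meas : MeasurableSet G' := by
      have hm : Measurable fun w => (‖x₀ w‖₊ : ENNReal) := hx₀.nnnorm.coe_nnreal_ennreal
      exact (hm measurableSet_Iic).compl
    have hμG' : μ G' = 0 := hEss
    have hG0 : volume (G' ∩ Set.Icc (0:ℝ) 1) = 0 := by
      rwa [hμ, Measure.restrict_apply hG'meas] at hμG'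
    have hB0 : volume ((fun z => z + (-t)) ⁻¹' (G' ∩ Set.Icc (0:ℝ) 1)) = 0 := by
      rw [measure_preimage_add_right volume (-t) _]
      exact hG0
    have hB0' : ∀ᵐ z ∂volume, z ∉ (fun z => z + (-t)) ⁻¹' (G' ∩ Set.Icc (0:ℝ) 1) :=
      measure_eq_zero_iff_ae_notMem.mp hB0
    rw [hμ]
    rw [ae_restrict_iff' measurableSet_Icc]
    filter_upwards [hB0'] with z hz hzIcc htz
    by_contra hbad
    apply hz
    constructor
    · exact hbad
    · constructor
      · simp only [neg_add_le_iff_le_add, zero_add] at *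
        linarith
      · have := hzIcc.2
        simp only [mem_Icc] at *
        linarith
  -- combine into the final essential sup estimate
  have hcoeff : (1:ENNReal) ≤ ENNReal.ofReal (Real.exp (-σ * (t - 1))) ∨ 1 ≤ t := by
    by_cases h : 1 ≤ t
    · exact Or.inr h
    · left
      rw [ENNReal.one_le_ofReal]
      have h0 : (0:ℝ) ≤ -σ * (t - 1) := by nlinarith
      calc (1:ℝ) = Real.exp 0 := Real.exp_zero.symm
        _ ≤ Real.exp (-σ * (t - 1)) := Real.exp_le_exp.mpr h0
  have hmain : MeasureTheory.eLpNorm (fun z => x t z) ⊤ μ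
      ≤ ENNReal.ofReal (Real.exp (-σ * (t - 1))) * E + ENNReal.ofReal (Real.exp σ * S) := by
    rw [eLpNorm_exponent_top]
    refine essSup_le_of_ae_le _ ?_
    have hmem : ∀ᵐ z ∂μ, z ∈ Set.Icc (0:ℝ) 1 := ae_restrict_mem measurableSet_Icc
    filter_upwards [hmem, hx₀ae] with z hz hzx₀
    rw [hx t ht z hz]
    by_cases hzt : z ≤ t
    · simp only [hzt, if_true]
      have hs : t - z ∈ Set.Icc (max 0 (t-1)) t := by
        constructor
        · apply max_le <;> [linarith [hz.1, hzt]; linarith [hz.2]]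
        · linarith [hz.1]
      have h1 : g (t - z) ≤ S := hgle _ hs
      have h2 : |v (t - z)| ≤ Real.exp σ * S := by
        have he : Real.exp (-σ * (t - (t - z))) = Real.exp (-(σ * z)) := by ring_nf
        have hpos : 0 < Real.exp (-(σ * z)) := Real.exp_pos _
        have h3 : |v (t - z)| * Real.exp (-(σ * z)) ≤ S := by
          rw [← he]; exact h1
        have h4 : |v (t - z)| ≤ S * Real.exp (σ * z) := by
          have := mul_le_mul_of_nonneg_right h3 (Real.exp_pos (σ * z)).le
          rw [mul_assoc, ← Real.exp_add] at this
          simpa using this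
        have h5 : Real.exp (σ * z) ≤ Real.exp σ := by
          apply Real.exp_le_exp.mpr
          nlinarith [hz.2]
        calc |v (t - z)| ≤ S * Real.exp (σ * z) := h4
          _ ≤ S * Real.exp σ := mul_le_mul_of_nonneg_left h5 hS0
          _ = Real.exp σ * S := mul_comm _ _
      calc ((‖v (t - z)‖₊ : ENNReal)) = ENNReal.ofReal |v (t - z)| := Real.enorm_eq_ofReal_abs _
        _ ≤ ENNReal.ofReal (Real.exp σ * S) := ENNReal.ofReal_le_ofReal h2
        _ ≤ _ := le_add_self
    · simp only [hzt, if_false]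
      push_neg at hzt
      have h1 : (‖x₀ (z - t)‖₊ : ENNReal) ≤ E := hzx₀ hzt
      have hc : (1:ENNReal) ≤ ENNReal.ofReal (Real.exp (-σ * (t - 1))) := by
        rcases hcoeff with h | h
        · exact h
        · exact absurd (lt_of_le_of_lt (le_trans h (le_of_lt hzt)) (lt_of_le_of_lt (le_refl z) (lt_of_le_of_ne (le_refl z) (fun _ => by linarith [hz.2])))) (by linarith [hz.2])
      calc (‖x₀ (z - t)‖₊ : ENNReal) ≤ E := h1
        _ = 1 * E := (one_mul _).symm
        _ ≤ ENNReal.ofReal (Real.exp (-σ * (t - 1))) * E := mul_le_mul_of_nonneg_right hc zero_le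
        _ ≤ _ := le_add_right (le_refl _)
  exact hmain
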